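/- Let G be a finite simple even-hole-free graph. Then any two independent sets A and B of G with |A| = |B| are TJ-reconfigurable, with dist_TJ(A,B) = |A \ B|; in particular, for every s, the TJ-reconfiguration graph on the independent sets of G of size s is connected. -/

import Mathlib

variable {V : Type*} [DecidableEq V]

/-- `A` is an independent set of the graph `G`. -/
def IsIndep (G : SimpleGraph V) (A : Finset V) : Prop :=
  ∀ u ∈ A, ∀ v ∈ A, ¬G.Adj u v

/-- A graph is even-hole-free if it contains no induced cycle with an even number of
vertices (a hole has at least 4 vertices). -/
def EvenHoleFree {W : Type*} (H : SimpleGraph W) : Prop :=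
  ∀ n : ℕ, 4 ≤ n → n % 2 = 0 → IsEmpty (SimpleGraph.cycleGraph n ↪g H)

/-- Two independent sets are TJ-adjacent (differ by one token jump). -/
def TJAdj (A B : Finset V) : Prop :=
  A.card = B.card ∧ (A \ B).card = 1 ∧ (B \ A).card = 1

/-- There is a TJ-reconfiguration sequence of length `ℓ` from `A` to `B` in `G`. -/
def TJSeq (G : SimpleGraph V) (A B : Finset V) (ℓ : ℕ) : Prop :=
  ∃ ρ : ℕ → Finset V, ρ 0 = A ∧ ρ ℓ = B ∧ (∀ i ≤ ℓ, IsIndep G (ρ i)) ∧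
    ∀ i < ℓ, TJAdj (ρ i) (ρ (i + 1))

section Aux

variable {G : SimpleGraph V}

/-- `v` has two distinct neighbours inside `T`. -/
def TwoNbrs (G : SimpleGraph V) (T : Finset V) (v : V) : Prop :=
  ∃ x₁ x₂, x₁ ∈ T ∧ x₂ ∈ T ∧ x₁ ≠ x₂ ∧ G.Adj v x₁ ∧ G.Adj v x₂

lemma indep_mono {A B : Finset V} (h : IsIndep G A) (hBA : B ⊆ A) : IsIndep G B :=
  fun u hu v hv => h u (hBA hu) v (hBA hv)

lemma mod_of_lt_two_mul {x n : ℕ} (hn : 0 < n) (hx : x < 2 * n) :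
    x % n = if x < n then x else x - n := by
  split
  · exact Nat.mod_eq_of_lt ‹_›
  · rw [Nat.mod_eq_sub_mod (by omega), Nat.mod_eq_of_lt (by omega)]

lemma cross_adj {X Y : Finset V} (hX : IsIndep G X) (hY : IsIndep G Y) {u v : V}
    (hu : u ∈ X ∪ Y) (hv : v ∈ X ∪ Y) (h : G.Adj u v) :
    (u ∈ X ∧ v ∈ Y) ∨ (u ∈ Y ∧ v ∈ X) := by
  rcases Finset.mem_union.mp hu with hu' | hu' <;> rcases Finset.mem_union.mp hv with hv' | hv'
  · exact absurd h (hX u hu' v hv')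
  · exact Or.inl ⟨hu', hv'⟩
  · exact Or.inr ⟨hu', hv'⟩
  · exact absurd h (hY u hu' v hv')

/-- From a (not necessarily induced) closed cyclic sequence inside `X ∪ Y`, with `X`, `Y`
independent and disjoint, we derive an even hole, contradicting even-hole-freeness. -/
lemma no_cycle (hehf : EvenHoleFree G) {X Y : Finset V} (hd : Disjoint X Y)
    (hX : IsIndep G X) (hY : IsIndep G Y)
    (h : ∃ (n : ℕ) (f : ℕ → V), 3 ≤ n ∧ (∀ i < n, f i ∈ X ∪ Y) ∧
      (∀ i j, i < n → j < n → f i = f j → i = j) ∧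
      (∀ i, i + 1 < n → G.Adj (f i) (f (i + 1))) ∧ G.Adj (f (n - 1)) (f 0)) : False := by
  classical
  set N : Set ℕ := {n | 3 ≤ n ∧ ∃ f : ℕ → V, (∀ i < n, f i ∈ X ∪ Y) ∧
      (∀ i j, i < n → j < n → f i = f j → i = j) ∧
      (∀ i, i + 1 < n → G.Adj (f i) (f (i + 1))) ∧ G.Adj (f (n - 1)) (f 0)} with hN
  have hNne : N.Nonempty := by
    obtain ⟨n, f, h1, h2, h3, h4, h5⟩ := h
    exact ⟨n, h1, f, h2, h3, h4, h5⟩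
  set n := sInf N with hn
  obtain ⟨hn3, f, hmem, hinj, hadj, hwrap⟩ : n ∈ N := Nat.sInf_mem hNne
  have hmin : ∀ m ∈ N, n ≤ m := fun m hm => Nat.sInf_le hm
  -- chord-freeness of the minimal cycle
  have chordfree : ∀ i j, i < j → j < n → G.Adj (f i) (f j) →
      j = i + 1 ∨ (i = 0 ∧ j = n - 1) := by
    intro i j hij hjn hAdj
    by_contra hcon
    push_neg at hcon
    obtain ⟨hne1, hne2⟩ := hcon
    have hi2 : i + 2 ≤ j := by omega
    have hjle : j - i ≤ n - 2 := by
      rcases Nat.lt_or_ge (j - i) (n - 1) with h' | h'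
      · omega
      · exfalso; exact hne2 (by omega) (by omega)
    set m := j - i + 1 with hm
    have hmN : m ∈ N := by
      refine ⟨by omega, fun k => f (i + k), ?_, ?_, ?_, ?_⟩
      · intro k hk; exact hmem _ (by omega)
      · intro k l hk hl hfe
        have := hinj (i + k) (i + l) (by omega) (by omega) hfe
        omega
      · intro k hk
        have h1 := hadj (i + k) (by omega)
        have he : i + (k + 1) = i + k + 1 := by omega
        show G.Adj (f (i + k)) (f (i + (k + 1)))
        rw [he]; exact h1
      · have he1 : i + (m - 1) = j := by omega
        show G.Adj (f (i + (m - 1))) (f (i + 0))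
        rw [he1, Nat.add_zero]
        exact hAdj.symm
    have := hmin m hmN
    omega
  -- parity along the cycle
  have key : ∀ (P Q : Finset V), Disjoint P Q → IsIndep G P → IsIndep G Q →
      (∀ i < n, f i ∈ P ∪ Q) → f 0 ∈ P → n % 2 = 0 := by
    intro P Q hPQ hPi hQi hmem' h0
    have par : ∀ k < n, (k % 2 = 0 → f k ∈ P) ∧ (k % 2 = 1 → f k ∈ Q) := by
      intro k
      induction k with
      | zero => intro _; exact ⟨fun _ => h0, fun h => by omega⟩
      | succ k ih =>
        intro hk
        have hk' : k < n := by omega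
        obtain ⟨ihP, ihQ⟩ := ih hk'
        have hAdj := hadj k hk
        have hcr := cross_adj hPi hQi (hmem' k hk') (hmem' (k + 1) hk) hAdj
        constructor
        · intro hpar
          have hkodd : k % 2 = 1 := by omega
          have hkQ := ihQ hkodd
          rcases hcr with ⟨h1, _⟩ | ⟨_, h2⟩
          · exact absurd hkQ (Finset.disjoint_left.mp hPQ h1)
          · exact h2
        · intro hpar
          have hkev : k % 2 = 0 := by omega
          have hkP := ihP hkev
          rcases hcr with ⟨_, h2⟩ | ⟨h1, _⟩
          · exact h2
          · exact absurd hkP (Finset.disjoint_right.mp hPQ h1)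
    have hlast : f (n - 1) ∈ Q := by
      have hcr := cross_adj hPi hQi (hmem' (n - 1) (by omega)) (hmem' 0 (by omega)) hwrap
      rcases hcr with ⟨_, h2⟩ | ⟨h1, _⟩
      · exact absurd h0 (Finset.disjoint_right.mp hPQ h2)
      · exact h1
    by_contra hodd
    have : (n - 1) % 2 = 0 := by omega
    have := (par (n - 1) (by omega)).1 this
    exact Finset.disjoint_left.mp hPQ this hlast
  have heven : n % 2 = 0 := by
    rcases Finset.mem_union.mp (hmem 0 (by omega)) with h0 | h0
    · exact key X Y hd hX hY hmem h0
    · exact key Y X hd.symm hY hX (fun i hi => by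
        rw [Finset.union_comm]; exact hmem i hi) h0
  have hn4 : 4 ≤ n := by omega
  -- value of subtraction in `Fin n`
  have subval : ∀ a b : Fin n, ((b - a : Fin n)).val =
      if n - a.val + b.val < n then n - a.val + b.val else n - a.val + b.val - n := by
    intro a b
    rw [Fin.sub_def]
    exact mod_of_lt_two_mul (by omega) (by omega)
  have subone : ∀ a b : Fin n, ((b - a : Fin n)).val = 1 ↔
      (b.val = a.val + 1 ∨ (a.val = n - 1 ∧ b.val = 0)) := by
    intro a b
    rw [subval a b]
    have ha := a.isLt
    have hb := b.isLt
    split <;> omega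
  -- build the even hole
  have hwrap' : ∀ i : ℕ, i = n - 1 → G.Adj (f i) (f 0) := fun i hi => hi ▸ hwrap
  have hFinj : Function.Injective (fun i : Fin n => f i.val) := by
    intro a b hab
    exact Fin.ext (hinj a.val b.val a.isLt b.isLt hab)
  have hmapiff : ∀ a b : Fin n,
      G.Adj (f a.val) (f b.val) ↔ (SimpleGraph.cycleGraph n).Adj a b := by
    intro a b
    rw [SimpleGraph.cycleGraph_adj', subone b a, subone a b]
    constructor
    · intro hAdj
      have hne : a.val ≠ b.val := fun he =>
        (G.ne_of_adj hAdj) (congrArg f he)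
      rcases Nat.lt_or_ge a.val b.val with hlt | hge
      · rcases chordfree a.val b.val hlt b.isLt hAdj with h' | ⟨h1, h2⟩
        · exact Or.inr (Or.inl h')
        · exact Or.inl (Or.inr ⟨h2, h1⟩)
      · have hlt : b.val < a.val := by omega
        rcases chordfree b.val a.val hlt a.isLt hAdj.symm with h' | ⟨h1, h2⟩
        · exact Or.inl (Or.inl h')
        · exact Or.inr (Or.inr ⟨h2, h1⟩)
    · rintro ((h' | ⟨h1, h2⟩) | (h' | ⟨h1, h2⟩))
      · have := hadj b.val (by rw [← h']; exact a.isLt)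
        rw [← h'] at this; exact this.symm
      · have := hwrap' b.val h1
        rw [← h2] at this; exact this.symm
      · have := hadj a.val (by rw [← h']; exact b.isLt)
        rw [← h'] at this; exact this
      · have := hwrap' a.val h1
        rw [← h2] at this; exact this
  exact (hehf n hn4 heven).false
    ⟨⟨fun i : Fin n => f i.val, hFinj⟩, fun {a b} => hmapiff a b⟩

/-- In a finite graph, a nonempty set in which every vertex has two neighbours inside the
set contains a closed cyclic sequence. -/
lemma exists_cycle [Fintype V] (G : SimpleGraph V) (S : Finset V) (hS : S.Nonempty)
    (hdeg : ∀ v ∈ S, TwoNbrs G S v) :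
    ∃ (n : ℕ) (f : ℕ → V), 3 ≤ n ∧ (∀ i < n, f i ∈ S) ∧
      (∀ i j, i < n → j < n → f i = f j → i = j) ∧
      (∀ i, i + 1 < n → G.Adj (f i) (f (i + 1))) ∧ G.Adj (f (n - 1)) (f 0) := by
  classical
  set P : Set ℕ := {m | ∃ p : ℕ → V, (∀ i < m, p i ∈ S) ∧
      (∀ i j, i < m → j < m → p i = p j → i = j) ∧
      (∀ i, i + 1 < m → G.Adj (p i) (p (i + 1)))} with hP
  obtain ⟨y₀, hy₀⟩ := hS
  have h2P : 2 ∈ P := by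
    obtain ⟨x₁, x₂, hx₁, hx₂, hne, ha₁, ha₂⟩ := hdeg y₀ hy₀
    refine ⟨fun i => if i = 0 then y₀ else x₁, ?_, ?_, ?_⟩
    · intro i hi
      by_cases h : i = 0 <;> simp [h, hy₀, hx₁]
    · intro i j hi hj hfe
      have hfe' : (if i = 0 then y₀ else x₁) = (if j = 0 then y₀ else x₁) := hfe
      by_cases h : i = 0 <;> by_cases h' : j = 0
      · omega
      · exfalso; rw [if_pos h, if_neg h'] at hfe'; exact (G.ne_of_adj ha₁) hfe'
      · exfalso; rw [if_neg h, if_pos h'] at hfe'; exact (G.ne_of_adj ha₁) hfe'.symm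
      · omega
    · intro i hi
      have h0 : i = 0 := by omega
      subst h0
      simpa using ha₁
  have hbdd : BddAbove P := by
    refine ⟨S.card, fun m hm => ?_⟩
    obtain ⟨p, hmem, hinj, _⟩ := hm
    calc m = (Finset.range m).card := by simp
    _ ≤ S.card := Finset.card_le_card_of_injOn p
        (fun i hi => hmem i (Finset.mem_range.mp hi))
        (fun i hi j hj he => hinj i j (Finset.mem_range.mp hi) (Finset.mem_range.mp hj) he)
  have hmemP : sSup P ∈ P := Nat.sSup_mem ⟨2, h2P⟩ hbdd
  set m := sSup P with hmdef
  have hm2 : 2 ≤ m := le_csSup hbdd h2P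
  obtain ⟨p, hmem, hinj, hadj⟩ := hmemP
  have hv : p (m - 1) ∈ S := hmem _ (by omega)
  obtain ⟨x₁, x₂, hx₁, hx₂, hxne, ha₁, ha₂⟩ := hdeg _ hv
  -- pick a neighbour of the endpoint different from its predecessor
  obtain ⟨w, hwS, hwadj, hwne⟩ :
      ∃ w, w ∈ S ∧ G.Adj (p (m - 1)) w ∧ w ≠ p (m - 2) := by
    by_cases h1 : x₁ = p (m - 2)
    · exact ⟨x₂, hx₂, ha₂, fun he => hxne (h1 ▸ he ▸ rfl)⟩
    · exact ⟨x₁, hx₁, ha₁, h1⟩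
  by_cases hw : ∃ k, k < m ∧ p k = w
  · obtain ⟨k, hk, hkw⟩ := hw
    have hkne1 : k ≠ m - 1 := by
      intro he
      exact (G.ne_of_adj hwadj) (by rw [← he]; exact hkw)
    have hkne2 : k ≠ m - 2 := by
      intro he
      exact hwne ((by rw [← he]; exact hkw : p (m - 2) = w).symm)
    have hk3 : k + 3 ≤ m := by omega
    refine ⟨m - k, fun i => p (k + i), by omega, ?_, ?_, ?_, ?_⟩
    · intro i hi; exact hmem _ (by omega)
    · intro i j hi hj he
      have := hinj (k + i) (k + j) (by omega) (by omega) he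
      omega
    · intro i hi
      have h1 := hadj (k + i) (by omega)
      have he : k + (i + 1) = k + i + 1 := by omega
      show G.Adj (p (k + i)) (p (k + (i + 1)))
      rw [he]; exact h1
    · show G.Adj (p (k + (m - k - 1))) (p (k + 0))
      have he1 : k + (m - k - 1) = m - 1 := by omega
      rw [he1, Nat.add_zero, hkw]
      exact hwadj
  · exfalso
    push_neg at hw
    have hext : m + 1 ∈ P := by
      refine ⟨fun i => if i = m then w else p i, ?_, ?_, ?_⟩
      · intro i hi
        show (if i = m then w else p i) ∈ S
        by_cases hi' : i = m
        · rw [if_pos hi']; exact hwS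
        · rw [if_neg hi']; exact hmem i (by omega)
      · intro i j hi hj he
        have he' : (if i = m then w else p i) = (if j = m then w else p j) := he
        by_cases hi' : i = m <;> by_cases hj' : j = m
        · omega
        · exfalso; rw [if_pos hi', if_neg hj'] at he'; exact hw j (by omega) he'.symm
        · exfalso; rw [if_neg hi', if_pos hj'] at he'; exact hw i (by omega) he'
        · rw [if_neg hi', if_neg hj'] at he'; exact hinj i j (by omega) (by omega) he'
      · intro i hi
        show G.Adj (if i = m then w else p i) (if i + 1 = m then w else p (i + 1))
        by_cases hi' : i + 1 = m
        · have hii : i ≠ m := by omega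
          have hieq : i = m - 1 := by omega
          rw [if_neg hii, if_pos hi', hieq]
          exact hwadj
        · have h1 : i ≠ m := by omega
          rw [if_neg h1, if_neg hi']
          exact hadj i (by omega)
    have := le_csSup hbdd hext
    omega

end Aux

section Main

variable {G : SimpleGraph V}

/-- Pruning lemma: in an even-hole-free graph, if `X` and `Y` are disjoint independent
sets and every vertex of `Y` has at least two neighbours in `X`, then `|Y| < |X|`. -/
lemma pruneB [Fintype V] (hehf : EvenHoleFree G) :
    ∀ N : ℕ, ∀ X Y : Finset V, X.card ≤ N → Disjoint X Y → IsIndep G X → IsIndep G Y →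
      Y.Nonempty → (∀ y ∈ Y, TwoNbrs G X y) → Y.card < X.card := by
  intro N
  induction N with
  | zero =>
    intro X Y hXN hd hXi hYi ⟨y₀, hy₀⟩ hdeg
    obtain ⟨x₁, _, hx₁, _⟩ := hdeg y₀ hy₀
    have : X = ∅ := Finset.card_eq_zero.mp (by omega)
    rw [this] at hx₁
    exact absurd hx₁ (Finset.notMem_empty _)
  | succ N ih =>
    intro X Y hXN hd hXi hYi hYne hdeg
    by_cases hx : ∃ x ∈ X, ¬TwoNbrs G Y x
    · obtain ⟨x, hxX, hxnot⟩ := hx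
      by_cases hyy : ∃ y ∈ Y, G.Adj x y
      · obtain ⟨y₀, hy₀Y, hy₀adj⟩ := hyy
        have huniq : ∀ y ∈ Y, G.Adj x y → y = y₀ := by
          intro y hy hadjy
          by_contra hne
          exact hxnot ⟨y, y₀, hy, hy₀Y, hne, hadjy, hy₀adj⟩
        by_cases hYe : Y.erase y₀ = ∅
        · -- Y = {y₀}
          have hY1 : Y = {y₀} := by
            rcases (Finset.erase_eq_empty_iff Y y₀).mp hYe with h | h
            · exact absurd hy₀Y (h ▸ Finset.notMem_empty _)
            · exact h
          obtain ⟨x₁, x₂, hx₁, hx₂, hxne, _, _⟩ := hdeg y₀ hy₀Y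
          have h2 : 2 ≤ X.card := by
            have hsub : ({x₁, x₂} : Finset V) ⊆ X := by
              intro z hz
              rcases Finset.mem_insert.mp hz with h | h
              · exact h ▸ hx₁
              · exact (Finset.mem_singleton.mp h) ▸ hx₂
            calc 2 = ({x₁, x₂} : Finset V).card := (Finset.card_pair hxne).symm
            _ ≤ X.card := Finset.card_le_card hsub
          rw [hY1, Finset.card_singleton]
          omega
        · have hYne' : (Y.erase y₀).Nonempty := Finset.nonempty_iff_ne_empty.mpr hYe
          have hrec := ih (X.erase x) (Y.erase y₀)
            (by
              have := Finset.card_erase_of_mem hxX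
              omega)
            (Finset.disjoint_of_subset_left (Finset.erase_subset _ _)
              (Finset.disjoint_of_subset_right (Finset.erase_subset _ _) hd))
            (indep_mono hXi (Finset.erase_subset _ _))
            (indep_mono hYi (Finset.erase_subset _ _))
            hYne'
            (by
              intro y hy
              obtain ⟨x₁, x₂, hx₁, hx₂, hxne', ha₁, ha₂⟩ :=
                hdeg y (Finset.mem_of_mem_erase hy)
              have hyne : y ≠ y₀ := Finset.ne_of_mem_erase hy
              have hx₁ne : x₁ ≠ x := by
                intro he
                exact hyne (huniq y (Finset.mem_of_mem_erase hy) (he ▸ ha₁).symm)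
              have hx₂ne : x₂ ≠ x := by
                intro he
                exact hyne (huniq y (Finset.mem_of_mem_erase hy) (he ▸ ha₂).symm)
              exact ⟨x₁, x₂, Finset.mem_erase.mpr ⟨hx₁ne, hx₁⟩,
                Finset.mem_erase.mpr ⟨hx₂ne, hx₂⟩, hxne', ha₁, ha₂⟩)
          have hcx := Finset.card_erase_of_mem hxX
          have hcy := Finset.card_erase_of_mem hy₀Y
          have hx1 : 1 ≤ X.card := Finset.card_pos.mpr ⟨x, hxX⟩
          have hy1 : 1 ≤ Y.card := Finset.card_pos.mpr ⟨y₀, hy₀Y⟩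
          omega
      · -- x has no neighbour in Y at all: drop x
        push_neg at hyy
        have hrec := ih (X.erase x) Y
          (by
            have := Finset.card_erase_of_mem hxX
            omega)
          (Finset.disjoint_of_subset_left (Finset.erase_subset _ _) hd)
          (indep_mono hXi (Finset.erase_subset _ _))
          hYi hYne
          (by
            intro y hy
            obtain ⟨x₁, x₂, hx₁, hx₂, hxne', ha₁, ha₂⟩ := hdeg y hy
            have hx₁ne : x₁ ≠ x := fun he => hyy y hy (he ▸ ha₁).symm
            have hx₂ne : x₂ ≠ x := fun he => hyy y hy (he ▸ ha₂).symm
            exact ⟨x₁, x₂, Finset.mem_erase.mpr ⟨hx₁ne, hx₁⟩,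
              Finset.mem_erase.mpr ⟨hx₂ne, hx₂⟩, hxne', ha₁, ha₂⟩)
        have hcx := Finset.card_erase_of_mem hxX
        have hx1 : 1 ≤ X.card := Finset.card_pos.mpr ⟨x, hxX⟩
        omega
    · -- minimum degree 2 on both sides: find a cycle, contradiction
      exfalso
      push_neg at hx
      have hdegS : ∀ v ∈ X ∪ Y, TwoNbrs G (X ∪ Y) v := by
        intro v hv
        rcases Finset.mem_union.mp hv with hv' | hv'
        · obtain ⟨x₁, x₂, h1, h2, h3, h4, h5⟩ := hx v hv'
          exact ⟨x₁, x₂, Finset.mem_union_right _ h1, Finset.mem_union_right _ h2, h3, h4, h5⟩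
        · obtain ⟨x₁, x₂, h1, h2, h3, h4, h5⟩ := hdeg v hv'
          exact ⟨x₁, x₂, Finset.mem_union_left _ h1, Finset.mem_union_left _ h2, h3, h4, h5⟩
      obtain ⟨y₀, hy₀⟩ := hYne
      exact no_cycle hehf hd hXi hYi
        (exists_cycle G (X ∪ Y) ⟨y₀, Finset.mem_union_right _ hy₀⟩ hdegS)

/-- The key one-step lemma. -/
lemma step_lemma [Fintype V] (hehf : EvenHoleFree G) {A B : Finset V}
    (hA : IsIndep G A) (hB : IsIndep G B) (hcard : A.card = B.card) (hne : A ≠ B) :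
    ∃ a b, a ∈ A \ B ∧ b ∈ B \ A ∧ IsIndep G (insert b (A.erase a)) := by
  classical
  set X := A \ B with hX
  set Y := B \ A with hY
  have hd : Disjoint X Y := by
    rw [Finset.disjoint_left]
    intro z hz hz'
    exact (Finset.mem_sdiff.mp hz').2 (Finset.mem_sdiff.mp hz).1
  have hXi : IsIndep G X := indep_mono hA (Finset.sdiff_subset)
  have hYi : IsIndep G Y := indep_mono hB (Finset.sdiff_subset)
  have hYne : Y.Nonempty := by
    rw [Finset.nonempty_iff_ne_empty]
    intro h
    have hBA : B ⊆ A := by rwa [← Finset.sdiff_eq_empty_iff_subset]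
    exact hne (Finset.eq_of_subset_of_card_le hBA (le_of_eq hcard)).symm
  have hcards : X.card = Y.card := Finset.card_sdiff_comm hcard
  have hnot : ¬∀ y ∈ Y, TwoNbrs G X y := by
    intro hall
    have := pruneB hehf X.card X Y le_rfl hd hXi hYi hYne hall
    omega
  push_neg at hnot
  obtain ⟨b, hbY, hbnot⟩ := hnot
  have hXne : X.Nonempty := by
    rw [← Finset.card_pos, hcards]
    exact Finset.card_pos.mpr hYne
  -- get a ∈ X such that every X-neighbour of b equals a
  obtain ⟨a, haX, hauni⟩ : ∃ a ∈ X, ∀ x ∈ X, G.Adj b x → x = a := by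
    by_cases hbadj : ∃ x ∈ X, G.Adj b x
    · obtain ⟨a, haX, haadj⟩ := hbadj
      refine ⟨a, haX, fun x hx hadjx => ?_⟩
      by_contra hxa
      exact hbnot ⟨x, a, hx, haX, hxa, hadjx, haadj⟩
    · push_neg at hbadj
      obtain ⟨a, haX⟩ := hXne
      exact ⟨a, haX, fun x hx hadjx => absurd hadjx (hbadj x hx)⟩
  refine ⟨a, b, haX, hbY, ?_⟩
  have hbB : b ∈ B := (Finset.mem_sdiff.mp hbY).1
  have hbnA : b ∉ A := (Finset.mem_sdiff.mp hbY).2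
  have hnoadj : ∀ v ∈ A.erase a, ¬G.Adj b v := by
    intro v hv hadjv
    have hvA : v ∈ A := Finset.mem_of_mem_erase hv
    have hvne : v ≠ a := Finset.ne_of_mem_erase hv
    by_cases hvB : v ∈ B
    · exact hB b hbB v hvB hadjv
    · exact hvne (hauni v (Finset.mem_sdiff.mpr ⟨hvA, hvB⟩) hadjv)
  intro u hu v hv
  rcases Finset.mem_insert.mp hu with hu' | hu' <;>
    rcases Finset.mem_insert.mp hv with hv' | hv'
  · subst hu'; subst hv'; exact G.loopless.irrefl _
  · subst hu'; exact hnoadj v hv'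
  · subst hv'
    intro hadjuv
    exact hnoadj u hu' hadjuv.symm
  · exact hA u (Finset.mem_of_mem_erase hu') v (Finset.mem_of_mem_erase hv')

/-- Existence of a TJ sequence of length `|A \ B|`. -/
lemma main_seq [Fintype V] (hehf : EvenHoleFree G) :
    ∀ d : ℕ, ∀ A B : Finset V, IsIndep G A → IsIndep G B → A.card = B.card →
      (A \ B).card = d → TJSeq G A B d := by
  intro d
  induction d with
  | zero =>
    intro A B hA hB hcard hd
    have hAB : A = B := by
      have hsub : A ⊆ B := by
        rwa [← Finset.sdiff_eq_empty_iff_subset, ← Finset.card_eq_zero]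
      exact Finset.eq_of_subset_of_card_le hsub (le_of_eq hcard.symm)
    subst hAB
    exact ⟨fun _ => A, rfl, rfl, fun i _ => hA, fun i hi => absurd hi (Nat.not_lt_zero i)⟩
  | succ d ih =>
    intro A B hA hB hcard hd
    have hne : A ≠ B := by
      intro he
      rw [he, Finset.sdiff_self, Finset.card_empty] at hd
      omega
    obtain ⟨a, b, haAB, hbBA, hA'⟩ := step_lemma hehf hA hB hcard hne
    have haA : a ∈ A := (Finset.mem_sdiff.mp haAB).1
    have hanB : a ∉ B := (Finset.mem_sdiff.mp haAB).2
    have hbB : b ∈ B := (Finset.mem_sdiff.mp hbBA).1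
    have hbnA : b ∉ A := (Finset.mem_sdiff.mp hbBA).2
    set A' := insert b (A.erase a) with hA'def
    have hbne : b ∉ A.erase a := fun h => hbnA (Finset.mem_of_mem_erase h)
    have hcardA' : A'.card = A.card := by
      rw [hA'def, Finset.card_insert_of_notMem hbne, Finset.card_erase_of_mem haA]
      have : 1 ≤ A.card := Finset.card_pos.mpr ⟨a, haA⟩
      omega
    have hsd : A' \ B = (A \ B).erase a := by
      ext x
      simp only [hA'def, Finset.mem_sdiff, Finset.mem_insert, Finset.mem_erase]
      constructor
      · rintro ⟨hx1 | hx2, hxB⟩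
        · exact absurd (hx1 ▸ hbB) hxB
        · exact ⟨hx2.1, hx2.2, hxB⟩
      · rintro ⟨hxa, hxA, hxB⟩
        exact ⟨Or.inr ⟨hxa, hxA⟩, hxB⟩
    have hsdcard : (A' \ B).card = d := by
      rw [hsd, Finset.card_erase_of_mem haAB, hd]
      omega
    obtain ⟨ρ', hρ'0, hρ'l, hρ'i, hρ'a⟩ :=
      ih A' B hA' hB (hcardA'.trans hcard) hsdcard
    have hTJ : TJAdj A A' := by
      refine ⟨hcardA'.symm, ?_, ?_⟩
      · have : A \ A' = {a} := by
          ext x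
          simp only [hA'def, Finset.mem_sdiff, Finset.mem_insert, Finset.mem_erase,
            Finset.mem_singleton]
          constructor
          · rintro ⟨hxA, hx⟩
            by_contra hxa
            exact hx (Or.inr ⟨hxa, hxA⟩)
          · rintro rfl
            refine ⟨haA, ?_⟩
            rintro (rfl | ⟨hne, _⟩)
            · exact hbnA haA
            · exact hne rfl
        rw [this, Finset.card_singleton]
      · have : A' \ A = {b} := by
          ext x
          simp only [hA'def, Finset.mem_sdiff, Finset.mem_insert, Finset.mem_erase,
            Finset.mem_singleton]
          constructor
          · rintro ⟨hx1 | hx2, hxA⟩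
            · exact hx1
            · exact absurd hx2.2 hxA
          · rintro rfl
            exact ⟨Or.inl rfl, hbnA⟩
        rw [this, Finset.card_singleton]
    refine ⟨fun i => if i = 0 then A else ρ' (i - 1), by simp, ?_, ?_, ?_⟩
    · show (if d + 1 = 0 then A else ρ' (d + 1 - 1)) = B
      rw [if_neg (by omega : d + 1 ≠ 0)]
      simpa using hρ'l
    · intro i hi
      show IsIndep G (if i = 0 then A else ρ' (i - 1))
      by_cases h0 : i = 0
      · rw [if_pos h0]; exact hA
      · rw [if_neg h0]; exact hρ'i (i - 1) (by omega)
    · intro i hi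
      by_cases h0 : i = 0
      · subst h0
        show TJAdj (if 0 = 0 then A else ρ' (0 - 1)) (if 0 + 1 = 0 then A else ρ' (0 + 1 - 1))
        rw [if_pos rfl, if_neg (by omega : (0:ℕ) + 1 ≠ 0)]
        simpa [hρ'0] using hTJ
      · show TJAdj (if i = 0 then A else ρ' (i - 1)) (if i + 1 = 0 then A else ρ' (i + 1 - 1))
        rw [if_neg h0, if_neg (by omega : i + 1 ≠ 0)]
        have h1 : i + 1 - 1 = (i - 1) + 1 := by omega
        rw [h1]
        exact hρ'a (i - 1) (by omega)

/-- Lower bound: any TJ sequence from `A` to `B` has length at least `|A \ B|`. -/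
lemma lower_bound {A B : Finset V} {ℓ : ℕ} (h : TJSeq G A B ℓ) : (A \ B).card ≤ ℓ := by
  obtain ⟨ρ, h0, hl, hind, hadj⟩ := h
  have key : ∀ j ≤ ℓ, (ρ (ℓ - j) \ B).card ≤ j := by
    intro j
    induction j with
    | zero =>
      intro _
      simp [hl]
    | succ j ih =>
      intro hj
      have hstep := hadj (ℓ - j - 1) (by omega)
      have he : ℓ - j - 1 + 1 = ℓ - j := by omega
      rw [he] at hstep
      obtain ⟨_, hsd, _⟩ := hstep
      have hsub : ρ (ℓ - (j + 1)) \ B ⊆ (ρ (ℓ - j) \ B) ∪ (ρ (ℓ - j - 1) \ ρ (ℓ - j)) := by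
        intro x hx
        obtain ⟨hx1, hx2⟩ := Finset.mem_sdiff.mp hx
        have he2 : ℓ - (j + 1) = ℓ - j - 1 := by omega
        rw [he2] at hx1
        by_cases hxm : x ∈ ρ (ℓ - j)
        · exact Finset.mem_union_left _ (Finset.mem_sdiff.mpr ⟨hxm, hx2⟩)
        · exact Finset.mem_union_right _ (Finset.mem_sdiff.mpr ⟨hx1, hxm⟩)
      calc (ρ (ℓ - (j + 1)) \ B).card
          ≤ ((ρ (ℓ - j) \ B) ∪ (ρ (ℓ - j - 1) \ ρ (ℓ - j))).card :=
            Finset.card_le_card hsub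
        _ ≤ (ρ (ℓ - j) \ B).card + (ρ (ℓ - j - 1) \ ρ (ℓ - j)).card :=
            Finset.card_union_le _ _
        _ ≤ j + 1 := by
            have h1 := ih (by omega)
            omega
  have := key ℓ le_rfl
  simpa [h0] using this
end Main

theorem stmt16 {V : Type*} [DecidableEq V] [Fintype V] (G : SimpleGraph V)
    (hehf : EvenHoleFree G) :
    (∀ A B : Finset V, IsIndep G A → IsIndep G B → A.card = B.card →
      (∃ ℓ, TJSeq G A B ℓ) ∧ IsLeast {ℓ | TJSeq G A B ℓ} ((A \ B).card)) ∧
    (∀ s : ℕ, ∀ A B : Finset V, IsIndep G A → IsIndep G B → A.card = s → B.card = s →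
      ∃ ℓ, TJSeq G A B ℓ) := by
  constructor
  · intro A B hA hB hc
    have hseq := main_seq hehf ((A \ B).card) A B hA hB hc rfl
    exact ⟨⟨_, hseq⟩, hseq, fun ℓ hℓ => lower_bound hℓ⟩
  · intro s A B hA hB hAs hBs
    exact ⟨_, main_seq hehf ((A \ B).card) A B hA hB (hAs.trans hBs.symm) rfl⟩
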